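/- Let ψ be a C² function of (t,r) with r > 0 satisfying ψ_tt - e^{-ψ}(ψ_rr + (1/r)ψ_r) + ψ_t² = 0. Define v = ψ_t, w = ψ_r, μ = v + e^{-ψ/2}w, ν = v - e^{-ψ/2}w, χ = e^{-ψ/2}. Then μ satisfies μ_t - χ μ_r = -((μ+ν)/2)² + (1/2)(χ/r - ν/2)(μ - ν). -/

import Mathlib

section aux
variable (F : ℝ × ℝ → ℝ)

lemma keyT1 (hF : Differentiable ℝ F) (t r : ℝ) :
    HasDerivAt (fun s => F (s, r)) (fderiv ℝ F (t, r) (1, 0)) t := by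
  have h1 : HasDerivAt (fun s : ℝ => (s, r)) ((1:ℝ), (0:ℝ)) t := by
    simpa using (hasDerivAt_id t).prodMk (hasDerivAt_const t r)
  exact (hF.differentiableAt.hasFDerivAt).comp_hasDerivAt t h1

lemma keyR1 (hF : Differentiable ℝ F) (t r : ℝ) :
    HasDerivAt (fun ρ => F (t, ρ)) (fderiv ℝ F (t, r) (0, 1)) r := by
  have h1 : HasDerivAt (fun ρ : ℝ => (t, ρ)) ((0:ℝ), (1:ℝ)) r := by
    simpa using (hasDerivAt_const r t).prodMk (hasDerivAt_id r)
  exact (hF.differentiableAt.hasFDerivAt).comp_hasDerivAt r h1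

lemma keyT2 (hF' : Differentiable ℝ (fderiv ℝ F)) (u : ℝ × ℝ) (t r : ℝ) :
    HasDerivAt (fun s => fderiv ℝ F (s, r) u)
      (fderiv ℝ (fderiv ℝ F) (t, r) (1, 0) u) t := by
  have h1 : HasDerivAt (fun s : ℝ => (s, r)) ((1:ℝ), (0:ℝ)) t := by
    simpa using (hasDerivAt_id t).prodMk (hasDerivAt_const t r)
  have h3 := (hF'.differentiableAt.hasFDerivAt).comp_hasDerivAt t h1
  exact (ContinuousLinearMap.apply ℝ ℝ u).hasFDerivAt.comp_hasDerivAt t h3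

lemma keyR2 (hF' : Differentiable ℝ (fderiv ℝ F)) (u : ℝ × ℝ) (t r : ℝ) :
    HasDerivAt (fun ρ => fderiv ℝ F (t, ρ) u)
      (fderiv ℝ (fderiv ℝ F) (t, r) (0, 1) u) r := by
  have h1 : HasDerivAt (fun ρ : ℝ => (t, ρ)) ((0:ℝ), (1:ℝ)) r := by
    simpa using (hasDerivAt_const r t).prodMk (hasDerivAt_id r)
  have h3 := (hF'.differentiableAt.hasFDerivAt).comp_hasDerivAt r h1
  exact (ContinuousLinearMap.apply ℝ ℝ u).hasFDerivAt.comp_hasDerivAt r h3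

end aux

noncomputable def partialT (f : ℝ → ℝ → ℝ) (t r : ℝ) : ℝ :=
  deriv (fun s => f s r) t

noncomputable def partialR (f : ℝ → ℝ → ℝ) (t r : ℝ) : ℝ :=
  deriv (fun ρ => f t ρ) r

/-- Radial reduced flow: if `ψ` is C² and satisfies
`ψ_tt - e^{-ψ}(ψ_rr + ψ_r/r) + ψ_t² = 0` for `r > 0`, then with
`μ = ψ_t + e^{-ψ/2}ψ_r`, `ν = ψ_t - e^{-ψ/2}ψ_r`, `χ = e^{-ψ/2}`,
`μ` satisfies `μ_t - χ μ_r = -((μ+ν)/2)² + (1/2)(χ/r - ν/2)(μ-ν)`. -/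
theorem stmt14 (ψ : ℝ → ℝ → ℝ) (hψ : ContDiff ℝ 2 (Function.uncurry ψ))
    (heq : ∀ t r : ℝ, 0 < r →
      partialT (partialT ψ) t r
        - Real.exp (-(ψ t r)) * (partialR (partialR ψ) t r + (1 / r) * partialR ψ t r)
        + (partialT ψ t r) ^ 2 = 0)
    (v w μ ν χ : ℝ → ℝ → ℝ)
    (hv : ∀ t r, v t r = partialT ψ t r)
    (hw : ∀ t r, w t r = partialR ψ t r)
    (hμ : ∀ t r, μ t r = v t r + Real.exp (-(ψ t r) / 2) * w t r)
    (hν : ∀ t r, ν t r = v t r - Real.exp (-(ψ t r) / 2) * w t r)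
    (hχ : ∀ t r, χ t r = Real.exp (-(ψ t r) / 2)) :
    ∀ t r : ℝ, 0 < r →
      partialT μ t r - χ t r * partialR μ t r
        = -((μ t r + ν t r) / 2) ^ 2
          + (1 / 2) * (χ t r / r - ν t r / 2) * (μ t r - ν t r) := by
  intro t r hr
  set F := Function.uncurry ψ with hFdef
  have hF1 : Differentiable ℝ F := hψ.differentiable (by norm_num)
  have hF' : Differentiable ℝ (fderiv ℝ F) := by
    exact (hψ.fderiv_right (m := 1) (by norm_num)).differentiable one_ne_zero
  have hψeq : ∀ s ρ : ℝ, ψ s ρ = F (s, ρ) := fun s ρ => rfl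
  -- first partials
  have hpT : ∀ s ρ : ℝ, partialT ψ s ρ = fderiv ℝ F (s, ρ) (1, 0) := fun s ρ =>
    (keyT1 F hF1 s ρ).deriv
  have hpR : ∀ s ρ : ℝ, partialR ψ s ρ = fderiv ℝ F (s, ρ) (0, 1) := fun s ρ =>
    (keyR1 F hF1 s ρ).deriv
  -- second partials
  have hpTT : partialT (partialT ψ) t r = fderiv ℝ (fderiv ℝ F) (t, r) (1, 0) (1, 0) := by
    have : (fun s => partialT ψ s r) = fun s => fderiv ℝ F (s, r) (1, 0) :=
      funext fun s => hpT s r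
    rw [partialT, this]; exact (keyT2 F hF' (1, 0) t r).deriv
  have hpRR : partialR (partialR ψ) t r = fderiv ℝ (fderiv ℝ F) (t, r) (0, 1) (0, 1) := by
    have : (fun ρ => partialR ψ t ρ) = fun ρ => fderiv ℝ F (t, ρ) (0, 1) :=
      funext fun ρ => hpR t ρ
    rw [partialR, this]; exact (keyR2 F hF' (0, 1) t r).deriv
  -- symmetry of second derivative
  have hsymm : fderiv ℝ (fderiv ℝ F) (t, r) (1, 0) (0, 1)
      = fderiv ℝ (fderiv ℝ F) (t, r) (0, 1) (1, 0) :=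
    (hψ.contDiffAt.isSymmSndFDerivAt (by simp)) (1, 0) (0, 1)
  -- notations
  set vt := fderiv ℝ F (t, r) (1, 0) with hvt
  set wr := fderiv ℝ F (t, r) (0, 1) with hwr
  set Att := fderiv ℝ (fderiv ℝ F) (t, r) (1, 0) (1, 0) with hAtt
  set Atr := fderiv ℝ (fderiv ℝ F) (t, r) (1, 0) (0, 1) with hAtr
  set Art := fderiv ℝ (fderiv ℝ F) (t, r) (0, 1) (1, 0) with hArt
  set Arr := fderiv ℝ (fderiv ℝ F) (t, r) (0, 1) (0, 1) with hArr
  set e := Real.exp (-(ψ t r) / 2) with he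
  have he2 : e * e = Real.exp (-(ψ t r)) := by
    rw [he, ← Real.exp_add]; ring_nf
  -- μ as an explicit function
  have hμfun : ∀ s ρ : ℝ, μ s ρ
      = fderiv ℝ F (s, ρ) (1, 0) + Real.exp (-(F (s, ρ)) / 2) * fderiv ℝ F (s, ρ) (0, 1) := by
    intro s ρ
    rw [hμ, hv, hw, hpT, hpR, hψeq]
  -- partialT μ
  have hFt : HasDerivAt (fun s => F (s, r)) vt t := keyT1 F hF1 t r
  have hexpT : HasDerivAt (fun s => Real.exp (-(F (s, r)) / 2)) (e * (-vt / 2)) t := by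
    have := ((hFt.neg).div_const 2).exp
    simpa [he, hψeq] using this
  have hmuT : partialT μ t r = Att + (e * (-vt / 2) * wr + e * Atr) := by
    have h1 : HasDerivAt (fun s => μ s r) (Att + (e * (-vt / 2) * wr + e * Atr)) t := by
      have : (fun s => μ s r) = fun s =>
          fderiv ℝ F (s, r) (1, 0) + Real.exp (-(F (s, r)) / 2) * fderiv ℝ F (s, r) (0, 1) :=
        funext fun s => hμfun s r
      rw [this]
      exact (keyT2 F hF' (1, 0) t r).add (hexpT.mul (keyT2 F hF' (0, 1) t r))
    exact h1.deriv
  -- partialR μ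
  have hFr : HasDerivAt (fun ρ => F (t, ρ)) wr r := keyR1 F hF1 t r
  have hexpR : HasDerivAt (fun ρ => Real.exp (-(F (t, ρ)) / 2)) (e * (-wr / 2)) r := by
    have := ((hFr.neg).div_const 2).exp
    simpa [he, hψeq] using this
  have hmuR : partialR μ t r = Art + (e * (-wr / 2) * wr + e * Arr) := by
    have h1 : HasDerivAt (fun ρ => μ t ρ) (Art + (e * (-wr / 2) * wr + e * Arr)) r := by
      have : (fun ρ => μ t ρ) = fun ρ =>
          fderiv ℝ F (t, ρ) (1, 0) + Real.exp (-(F (t, ρ)) / 2) * fderiv ℝ F (t, ρ) (0, 1) :=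
        funext fun ρ => hμfun t ρ
      rw [this]
      exact (keyR2 F hF' (1, 0) t r).add (hexpR.mul (keyR2 F hF' (0, 1) t r))
    exact h1.deriv
  -- PDE in new notation
  have heq' : Att - (e * e) * (Arr + (1 / r) * wr) + vt ^ 2 = 0 := by
    have := heq t r hr
    rw [hpTT, hpRR, hpR, hpT, ← he2, ← hvt, ← hwr] at this
    exact this
  -- final algebra
  rw [hmuT, hmuR, hμ, hν, hχ, hv, hw, hpT, hpR, ← he, ← hvt, ← hwr, ← hsymm]
  have hAtt' : Att = (e * e) * (Arr + (1 / r) * wr) - vt ^ 2 := by linarith [heq']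
  rw [hAtt']
  field_simp
  ring
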